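/- Let B be an n×m complex matrix with columns x_1,...,x_m and rows w_1,...,w_n. Then the columns attain the Welch bound for k=1 with equality, i.e., n · Σ_{i,j} |⟨x_i,x_j⟩|^2 = (Σ_i ⟨x_i,x_i⟩)^2, if and only if the rows w_1,...,w_n all have equal length and are pairwise orthogonal. -/

import Mathlib

open Finset in
private theorem welch_sum4_swap {m n : ℕ} (F : Fin n → Fin n → Fin m → Fin m → ℂ) :
    ∑ i, ∑ j, ∑ p, ∑ q, F p q i j = ∑ p, ∑ q, ∑ i, ∑ j, F p q i j := by
  have h1 : ∀ i : Fin m, ∑ j, ∑ p, ∑ q, F p q i j = ∑ p, ∑ j, ∑ q, F p q i j :=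
    fun i => Finset.sum_comm
  simp_rw [h1]
  rw [Finset.sum_comm]
  refine Finset.sum_congr rfl fun p _ => ?_
  have h2 : ∀ i : Fin m, ∑ j, ∑ q, F p q i j = ∑ q, ∑ j, F p q i j := fun i => Finset.sum_comm
  simp_rw [h2]
  exact Finset.sum_comm

open Finset in
private theorem welch_key_id {m n : ℕ} (B : Matrix (Fin n) (Fin m) ℂ) :
    ∑ i, ∑ j, (starRingEnd ℂ) (∑ p, (starRingEnd ℂ) (B p i) * B p j) * (∑ p, (starRingEnd ℂ) (B p i) * B p j)
    = ∑ p, ∑ q, (starRingEnd ℂ) (∑ j, (starRingEnd ℂ) (B p j) * B q j) * (∑ j, (starRingEnd ℂ) (B p j) * B q j) := by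
  have L : ∀ i j : Fin m,
      (starRingEnd ℂ) (∑ p, (starRingEnd ℂ) (B p i) * B p j) * (∑ p, (starRingEnd ℂ) (B p i) * B p j)
      = ∑ p, ∑ q, (B p i * (starRingEnd ℂ) (B p j)) * ((starRingEnd ℂ) (B q i) * B q j) := by
    intro i j
    rw [map_sum, Finset.sum_mul_sum]
    exact Finset.sum_congr rfl fun p _ => Finset.sum_congr rfl fun q _ => by
      simp only [map_mul, Complex.conj_conj]; try ring
  have R : ∀ p q : Fin n,
      (starRingEnd ℂ) (∑ j, (starRingEnd ℂ) (B p j) * B q j) * (∑ j, (starRingEnd ℂ) (B p j) * B q j)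
      = ∑ i, ∑ j, (B p i * (starRingEnd ℂ) (B p j)) * ((starRingEnd ℂ) (B q i) * B q j) := by
    intro p q
    rw [map_sum, Finset.sum_mul_sum]
    exact Finset.sum_congr rfl fun i _ => Finset.sum_congr rfl fun j _ => by
      simp only [map_mul, Complex.conj_conj]; try ring
  simp_rw [L, R]
  exact welch_sum4_swap _

open Finset in
private theorem welch_aux {n m : ℕ} (hn : 0 < n) (w : Fin n → EuclideanSpace ℂ (Fin m)) :
    ((n : ℝ) * ∑ p, ∑ q, ‖(inner ℂ (w p) (w q) : ℂ)‖ ^ 2 = (∑ p, ‖w p‖ ^ 2) ^ 2) ↔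
    ((∀ p q, ‖w p‖ = ‖w q‖) ∧ (∀ p q, p ≠ q → (inner ℂ (w p) (w q) : ℂ) = 0)) := by
  set a : Fin n → ℝ := fun p => ‖w p‖ ^ 2 with ha
  set c : Fin n → Fin n → ℝ := fun p q => ‖(inner ℂ (w p) (w q) : ℂ)‖ ^ 2 with hc
  have hdiag : ∀ p, c p p = (a p) ^ 2 := by
    intro p
    simp only [hc, ha]
    rw [@inner_self_eq_norm_sq_to_K ℂ]
    simp [← Complex.ofReal_pow]
  have hc0 : ∀ p q, 0 ≤ c p q := fun p q => by positivity
  set E : ℝ := ∑ p, ∑ q, if p = q then 0 else c p q with hE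
  set D : ℝ := ∑ p, ∑ q, (a p - a q) ^ 2 with hD
  have hE0 : 0 ≤ E := Finset.sum_nonneg fun p _ => Finset.sum_nonneg fun q _ => by
    split <;> [rfl; exact hc0 p q]
  have hD0 : 0 ≤ D := Finset.sum_nonneg fun p _ => Finset.sum_nonneg fun q _ => sq_nonneg _
  have hsplit : ∑ p, ∑ q, c p q = (∑ p, (a p) ^ 2) + E := by
    rw [hE, ← Finset.sum_add_distrib]
    refine Finset.sum_congr rfl fun p _ => ?_
    have hpt : ∀ q, c p q = (if p = q then (a p) ^ 2 else 0) + (if p = q then 0 else c p q) := by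
      intro q; by_cases h : p = q
      · subst h; simp [hdiag]
      · simp [h]
    rw [Finset.sum_congr rfl fun q _ => hpt q, Finset.sum_add_distrib, Finset.sum_ite_eq]
    simp
  have s1 : ∑ _p : Fin n, ∑ _q : Fin n, (a _p) ^ 2 = (n : ℝ) * ∑ p, (a p) ^ 2 := by
    rw [Finset.mul_sum]
    refine Finset.sum_congr rfl fun p _ => ?_
    rw [Finset.sum_const, Finset.card_univ, Fintype.card_fin, nsmul_eq_mul]
  have s2 : ∑ _p : Fin n, ∑ q : Fin n, (a q) ^ 2 = (n : ℝ) * ∑ p, (a p) ^ 2 := by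
    rw [Finset.sum_const, Finset.card_univ, Fintype.card_fin, nsmul_eq_mul]
  have s3 : ∑ p : Fin n, ∑ q : Fin n, (a p * a q) = (∑ p, a p) ^ 2 := by
    rw [sq, Finset.sum_mul_sum]
  have e1 : D = (n : ℝ) * (∑ p, (a p) ^ 2) + (n : ℝ) * (∑ p, (a p) ^ 2)
      - (∑ p, a p) ^ 2 - (∑ p, a p) ^ 2 := by
    rw [hD]
    have expand : ∀ p q : Fin n, (a p - a q) ^ 2
        = ((a p) ^ 2 + (a q) ^ 2 - a p * a q) - a p * a q := fun p q => by ring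
    simp_rw [expand]
    simp only [Finset.sum_sub_distrib, Finset.sum_add_distrib]
    rw [s1, s2, s3]
  have hsq : (n : ℝ) * ∑ p, (a p) ^ 2 = (∑ p, a p) ^ 2 + (1/2) * D := by
    rw [e1]; ring
  have hmain : (n : ℝ) * ∑ p, ∑ q, c p q = (∑ p, a p) ^ 2 + ((n : ℝ) * E + (1/2) * D) := by
    rw [hsplit, mul_add, hsq]; ring
  rw [show (∑ p, ‖w p‖ ^ 2) = ∑ p, a p from rfl]
  rw [show (∑ p, ∑ q, ‖(inner ℂ (w p) (w q) : ℂ)‖ ^ 2) = ∑ p, ∑ q, c p q from rfl]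
  constructor
  · intro h
    have hz : (n : ℝ) * E + (1/2) * D = 0 := by linarith [hmain, h]
    have hnE : 0 ≤ (n : ℝ) * E := mul_nonneg (by positivity) hE0
    have hEz : E = 0 := by
      have hz2 : (n : ℝ) * E = 0 := by linarith
      rcases mul_eq_zero.mp hz2 with h' | h'
      · exact absurd h' (by positivity)
      · exact h'
    have hDz : D = 0 := by linarith
    constructor
    · intro p q
      have h1 := (Finset.sum_eq_zero_iff_of_nonneg
        (fun p _ => Finset.sum_nonneg fun q _ => sq_nonneg _)).mp hDz p (Finset.mem_univ p)
      have h2 := (Finset.sum_eq_zero_iff_of_nonneg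
        (fun q _ => sq_nonneg _)).mp h1 q (Finset.mem_univ q)
      have haeq : a p = a q := by
        have := sq_eq_zero_iff.mp h2
        linarith [this]
      rw [← Real.sqrt_sq (norm_nonneg (w p)), ← Real.sqrt_sq (norm_nonneg (w q))]
      rw [show ‖w p‖ ^ 2 = a p from rfl, show ‖w q‖ ^ 2 = a q from rfl, haeq]
    · intro p q hpq
      have h1 := (Finset.sum_eq_zero_iff_of_nonneg
        (fun p _ => Finset.sum_nonneg fun q _ => by split <;> [rfl; exact hc0 _ _])).mp hEz p (Finset.mem_univ p)
      have h2 := (Finset.sum_eq_zero_iff_of_nonneg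
        (fun q _ => by split <;> [rfl; exact hc0 _ _])).mp h1 q (Finset.mem_univ q)
      rw [if_neg hpq] at h2
      have hnz : ‖(inner ℂ (w p) (w q) : ℂ)‖ = 0 := (pow_eq_zero_iff (two_ne_zero)).mp h2
      exact norm_eq_zero.mp hnz
  · rintro ⟨hnorm, horth⟩
    have hEz : E = 0 := Finset.sum_eq_zero fun p _ => Finset.sum_eq_zero fun q _ => by
      by_cases h : p = q
      · rw [if_pos h]
      · rw [if_neg h, hc]; simp [horth p q h]
    have hDz : D = 0 := Finset.sum_eq_zero fun p _ => Finset.sum_eq_zero fun q _ => by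
      rw [ha]; simp [hnorm p q]
    rw [hmain, hEz, hDz]; ring

theorem welch_k1_equality_iff_rows_orthogonal (n m : ℕ)
    (B : Matrix (Fin n) (Fin m) ℂ) :
    (let x : Fin m → EuclideanSpace ℂ (Fin n) := fun j => WithLp.toLp 2 (fun i => B i j);
     let w : Fin n → EuclideanSpace ℂ (Fin m) := fun i => WithLp.toLp 2 (fun j => B i j);
     ((n : ℝ) * ∑ i, ∑ j, ‖(inner ℂ (x i) (x j) : ℂ)‖ ^ 2 =
       (∑ j, ‖x j‖ ^ 2) ^ 2) ↔
     ((∀ i i', ‖w i‖ = ‖w i'‖) ∧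
      (∀ i i', i ≠ i' → (inner ℂ (w i) (w i') : ℂ) = 0))) := by
  intro x w
  have hxdef : x = fun j => WithLp.toLp 2 (fun i => B i j) := rfl
  have hwdef : w = fun i => WithLp.toLp 2 (fun j => B i j) := rfl
  rcases Nat.eq_zero_or_pos n with hn0 | hn
  · subst hn0
    constructor
    · intro _
      exact ⟨fun i => i.elim0, fun i => i.elim0⟩
    · intro _
      have hx0 : ∀ j, ‖x j‖ = 0 := fun j => by
        rw [EuclideanSpace.norm_eq]; simp
      simp [hx0]
  · have hx : ∀ i j, (inner ℂ (x i) (x j) : ℂ) = ∑ p, (starRingEnd ℂ) (B p i) * B p j := by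
      intro i j; rw [hxdef]; simp [PiLp.inner_apply, RCLike.inner_apply, mul_comm]
    have hw : ∀ p q, (inner ℂ (w p) (w q) : ℂ) = ∑ j, (starRingEnd ℂ) (B p j) * B q j := by
      intro p q; rw [hwdef]; simp [PiLp.inner_apply, RCLike.inner_apply, mul_comm]
    have hnormsq : ∀ z : ℂ, ‖z‖ ^ 2 = ((starRingEnd ℂ) z * z).re := by
      intro z; rw [Complex.sq_norm]
      simp [Complex.normSq_apply, Complex.mul_re]
    have hS : ∑ i, ∑ j, ‖(inner ℂ (x i) (x j) : ℂ)‖ ^ 2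
        = ∑ p, ∑ q, ‖(inner ℂ (w p) (w q) : ℂ)‖ ^ 2 := by
      simp_rw [hnormsq, hx, hw, ← Complex.re_sum]
      rw [welch_key_id]
    have hT : ∑ j, ‖x j‖ ^ 2 = ∑ p, ‖w p‖ ^ 2 := by
      have h1 : ∀ j, ‖x j‖ ^ 2 = ∑ p, ‖B p j‖ ^ 2 := by
        intro j
        rw [EuclideanSpace.norm_eq, Real.sq_sqrt (by positivity)]
      have h2 : ∀ p, ‖w p‖ ^ 2 = ∑ j, ‖B p j‖ ^ 2 := by
        intro p
        rw [EuclideanSpace.norm_eq, Real.sq_sqrt (by positivity)]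
      simp_rw [h1, h2]
      exact Finset.sum_comm
    rw [hS, hT]
    exact welch_aux hn w
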